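/- When WPT is deactivated, the optimal device transmit power p_k(T) determined by G_k(p_k) = δ*(T) with Σ_j E_j/(p_j + c_j) = T is strictly decreasing in T: if T increases (with all E_k fixed), then every p_k decreases. -/
import Mathlib

open Real Set

lemma G_hasDerivAt (w γ c : ℝ) (p : ℝ) (hp : 0 ≤ p) (hγ : 0 < γ) (hc : 0 < c) :
    HasDerivAt (fun q => w * Real.logb 2 (1 + q * γ)
        - w * (q + c) * γ / ((1 + q * γ) * Real.log 2))
      (w * γ^2 * (p + c) / ((1 + p * γ)^2 * Real.log 2)) p := by
  have hs : (0:ℝ) < 1 + p * γ := by nlinarith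
  have hs' : (1:ℝ) + p * γ ≠ 0 := ne_of_gt hs
  have hl2 : Real.log 2 ≠ 0 := ne_of_gt (Real.log_pos (by norm_num))
  have h1 : HasDerivAt (fun q : ℝ => 1 + q * γ) γ p := by
    simpa using ((hasDerivAt_id p).mul_const γ).const_add 1
  have h2 : HasDerivAt (fun q : ℝ => Real.log (1 + q * γ)) (γ / (1 + p * γ)) p :=
    h1.log hs'
  have h3 : HasDerivAt (fun q : ℝ => q + c) 1 p := (hasDerivAt_id p).add_const c
  have h4 : HasDerivAt (fun q : ℝ => (q + c) / (1 + q * γ))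
      ((1 * (1 + p * γ) - (p + c) * γ) / (1 + p * γ)^2) p := h3.div h1 hs'
  have h5 : HasDerivAt (fun q : ℝ =>
      (w / Real.log 2) * Real.log (1 + q * γ)
        - (w * γ / Real.log 2) * ((q + c) / (1 + q * γ)))
      ((w / Real.log 2) * (γ / (1 + p * γ))
        - (w * γ / Real.log 2) * ((1 * (1 + p * γ) - (p + c) * γ) / (1 + p * γ)^2)) p :=
    (h2.const_mul _).sub (h4.const_mul _)
  have hfun : (fun q : ℝ => w * Real.logb 2 (1 + q * γ)
        - w * (q + c) * γ / ((1 + q * γ) * Real.log 2))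
      = (fun q : ℝ => (w / Real.log 2) * Real.log (1 + q * γ)
        - (w * γ / Real.log 2) * ((q + c) / (1 + q * γ))) := by
    funext q
    have e1 : w * Real.logb 2 (1 + q * γ) = w / Real.log 2 * Real.log (1 + q * γ) := by
      rw [Real.logb]; ring
    have e2 : w * (q + c) * γ / ((1 + q * γ) * Real.log 2)
        = w * γ / Real.log 2 * ((q + c) / (1 + q * γ)) := by
      rw [div_mul_div_comm, mul_comm (1 + q * γ) (Real.log 2)]
      congr 1
      ring
    rw [e1, e2]
  have hval : (w / Real.log 2) * (γ / (1 + p * γ))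
        - (w * γ / Real.log 2) * ((1 * (1 + p * γ) - (p + c) * γ) / (1 + p * γ)^2)
      = w * γ^2 * (p + c) / ((1 + p * γ)^2 * Real.log 2) := by
    field_simp
    ring
  rw [hfun]
  rw [← hval]
  exact h5

lemma G_strictMonoOn (w γ c : ℝ) (hw : 0 < w) (hγ : 0 < γ) (hc : 0 < c) :
    StrictMonoOn (fun q => w * Real.logb 2 (1 + q * γ)
        - w * (q + c) * γ / ((1 + q * γ) * Real.log 2)) (Set.Ici 0) := by
  apply strictMonoOn_of_deriv_pos (convex_Ici 0)
  · intro x hx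
    exact (G_hasDerivAt w γ c x hx hγ hc).continuousAt.continuousWithinAt
  · intro x hx
    rw [interior_Ici] at hx
    have hx' : 0 < x := hx
    rw [(G_hasDerivAt w γ c x hx'.le hγ hc).deriv]
    have hs : (0:ℝ) < 1 + x * γ := by nlinarith [mul_pos hx' hγ]
    have hl2 : (0:ℝ) < Real.log 2 := Real.log_pos (by norm_num)
    have hxc : (0:ℝ) < x + c := by linarith
    positivity

theorem power_decreasing_in_T (K : ℕ) (w γ c E : Fin K → ℝ)
    (hw : ∀ k, 0 < w k) (hγ : ∀ k, 0 < γ k) (hc : ∀ k, 0 < c k) (hE : ∀ k, 0 < E k)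
    (G : Fin K → ℝ → ℝ)
    (hG : ∀ k p, G k p = w k * Real.logb 2 (1 + p * γ k)
        - w k * (p + c k) * γ k / ((1 + p * γ k) * Real.log 2))
    (T T' δ δ' : ℝ) (p p' : Fin K → ℝ)
    (hTT' : T < T')
    (hp : ∀ k, 0 ≤ p k) (hp' : ∀ k, 0 ≤ p' k)
    (hroot : ∀ k, G k (p k) = δ) (hroot' : ∀ k, G k (p' k) = δ')
    (htime : ∑ k, E k / (p k + c k) = T) (htime' : ∑ k, E k / (p' k + c k) = T') :
    ∀ k, p' k < p k := by
  have hmono : ∀ k, StrictMonoOn (G k) (Set.Ici (0:ℝ)) := by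
    intro k
    have := G_strictMonoOn (w k) (γ k) (c k) (hw k) (hγ k) (hc k)
    have hfun : G k = fun q => w k * Real.logb 2 (1 + q * γ k)
        - w k * (q + c k) * γ k / ((1 + q * γ k) * Real.log 2) := funext (hG k)
    rw [hfun]; exact this
  intro k0
  by_contra hcon
  push_neg at hcon
  -- δ ≤ δ'
  have hδ : δ ≤ δ' := by
    rw [← hroot k0, ← hroot' k0]
    exact (hmono k0).monotoneOn (hp k0) (hp' k0) hcon
  have hple : ∀ k, p k ≤ p' k := by
    intro k
    have : G k (p k) ≤ G k (p' k) := by rw [hroot k, hroot' k]; exact hδ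
    exact ((hmono k).le_iff_le (hp k) (hp' k)).mp this
  have hsum : T' ≤ T := by
    rw [← htime, ← htime']
    apply Finset.sum_le_sum
    intro k _
    have h1 : (0:ℝ) < p k + c k := by have := hp k; have := hc k; linarith
    exact div_le_div_of_nonneg_left (hE k).le h1 (by have := hple k; linarith)
  linarith
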